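/- Let T be an n×n unitary matrix and let T₀ be its (n−1)×(n−1) top-left corner. Then there exists an (n−1)×(n−1) unitary matrix A₀ with ‖T₀ − A₀‖_F ≤ 1 in the Frobenius norm. -/

import Mathlib

open Matrix Finset

/-- The Frobenius norm of a complex matrix. -/
noncomputable def frobNorm {m n : Type*} [Fintype m] [Fintype n]
    (M : Matrix m n ℂ) : ℝ :=
  Real.sqrt ((Matrix.trace (Mᴴ * M)).re)

/-- If `T` is an `(n+1)×(n+1)` unitary matrix and `T₀` its top-left `n×n`
corner, then there is an `n×n` unitary matrix `A₀` with `‖T₀ − A₀‖_F ≤ 1`. -/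
theorem stmt2 (n : ℕ) (T : Matrix (Fin (n + 1)) (Fin (n + 1)) ℂ)
    (hT : T ∈ Matrix.unitaryGroup (Fin (n + 1)) ℂ) :
    ∃ A₀ : Matrix (Fin n) (Fin n) ℂ, A₀ ∈ Matrix.unitaryGroup (Fin n) ℂ ∧
      frobNorm (T.submatrix Fin.castSucc Fin.castSucc - A₀) ≤ 1 := by
  classical
  have h1 : star T * T = 1 := Unitary.star_mul_self_of_mem hT
  have h2 : T * star T = 1 := Unitary.mul_star_self_of_mem hT
  set L : Fin (n+1) := Fin.last n with hLdef
  set r : Fin n → ℂ := fun j => T L j.castSucc with hrdef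
  set c : Fin n → ℂ := fun i => T i.castSucc L with hcdef
  set t : ℂ := T L L with htdef
  have E1 : ∀ a b : Fin (n+1),
      (∑ i, (starRingEnd ℂ) (T i a) * T i b) = if a = b then 1 else 0 := by
    intro a b
    have h : (star T * T) a b = (1 : Matrix (Fin (n+1)) (Fin (n+1)) ℂ) a b := by rw [h1]
    rw [Matrix.mul_apply, Matrix.one_apply] at h
    simp only [Matrix.star_apply, RCLike.star_def] at h
    exact h
  have E2 : ∀ a b : Fin (n+1),
      (∑ j, T a j * (starRingEnd ℂ) (T b j)) = if a = b then 1 else 0 := by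
    intro a b
    have h : (T * star T) a b = (1 : Matrix (Fin (n+1)) (Fin (n+1)) ℂ) a b := by rw [h2]
    rw [Matrix.mul_apply, Matrix.one_apply] at h
    simp only [Matrix.star_apply, RCLike.star_def] at h
    exact h
  -- key entrywise facts
  have F1 : ∀ j k : Fin n,
      (∑ i : Fin n, (starRingEnd ℂ) (T i.castSucc j.castSucc) * T i.castSucc k.castSucc)
        = (if j = k then 1 else 0) - (starRingEnd ℂ) (r j) * r k := by
    intro j k
    have h := E1 j.castSucc k.castSucc
    rw [Fin.sum_univ_castSucc] at h
    have hif : (if j.castSucc = k.castSucc then (1:ℂ) else 0) = if j = k then 1 else 0 := by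
      simp [Fin.castSucc_inj]
    rw [hif] at h
    linear_combination h
  have F2 : ∀ j : Fin n,
      (∑ i : Fin n, (starRingEnd ℂ) (T i.castSucc j.castSucc) * c i)
        = -((starRingEnd ℂ) (r j) * t) := by
    intro j
    have h := E1 j.castSucc L
    rw [Fin.sum_univ_castSucc] at h
    have hne : j.castSucc ≠ L := (Fin.castSucc_lt_last j).ne
    rw [if_neg hne] at h
    linear_combination h
  have F2' : ∀ k : Fin n,
      (∑ i : Fin n, (starRingEnd ℂ) (c i) * T i.castSucc k.castSucc)
        = -(r k * (starRingEnd ℂ) t) := by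
    intro k
    have hh : (∑ i : Fin n, (starRingEnd ℂ) (c i) * T i.castSucc k.castSucc)
        = (starRingEnd ℂ) (∑ i : Fin n, (starRingEnd ℂ) (T i.castSucc k.castSucc) * c i) := by
      rw [map_sum]
      refine Finset.sum_congr rfl fun i _ => ?_
      rw [_root_.map_mul, Complex.conj_conj, mul_comm]
    rw [hh, F2 k, map_neg, _root_.map_mul, Complex.conj_conj, mul_comm]
  set ρ : ℝ := ∑ j, Complex.normSq (r j) with hρdef
  have hρnn : 0 ≤ ρ := Finset.sum_nonneg fun j _ => Complex.normSq_nonneg _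
  have hρr : (∑ j, (starRingEnd ℂ) (r j) * r j) = (ρ : ℂ) := by
    rw [hρdef]
    push_cast
    exact Finset.sum_congr rfl fun j _ => Complex.normSq_eq_conj_mul_self.symm
  have hρ1 : ρ + Complex.normSq t = 1 := by
    have h := E2 L L
    rw [Fin.sum_univ_castSucc, if_pos rfl] at h
    have h' : (∑ j : Fin n, (starRingEnd ℂ) (r j) * r j) + (starRingEnd ℂ) t * t = 1 := by
      calc (∑ j : Fin n, (starRingEnd ℂ) (r j) * r j) + (starRingEnd ℂ) t * t
          = (∑ j : Fin n, T L j.castSucc * (starRingEnd ℂ) (T L j.castSucc))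
              + T L L * (starRingEnd ℂ) (T L L) := by
            simp [hrdef, htdef, mul_comm]
        _ = 1 := h
    rw [hρr] at h'
    have : ((ρ : ℂ) + (Complex.normSq t : ℂ)) = 1 := by
      rw [← Complex.normSq_eq_conj_mul_self] at h'
      exact h'
    exact_mod_cast this
  have hc : (∑ i, (starRingEnd ℂ) (c i) * c i) = (ρ : ℂ) := by
    have h := E1 L L
    rw [Fin.sum_univ_castSucc, if_pos rfl] at h
    have h' : (∑ i : Fin n, (starRingEnd ℂ) (c i) * c i) + (starRingEnd ℂ) t * t = 1 := h
    rw [← Complex.normSq_eq_conj_mul_self] at h'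
    have : (∑ i : Fin n, (starRingEnd ℂ) (c i) * c i) = 1 - (Complex.normSq t : ℂ) := by
      linear_combination h'
    rw [this]
    have : (ρ : ℝ) = 1 - Complex.normSq t := by linarith
    rw [this]; push_cast; ring
  rcases eq_or_lt_of_le hρnn with h0 | hpos
  · -- ρ = 0 : the corner is itself unitary
    have hrz : ∀ j, r j = 0 := by
      intro j
      have := (Finset.sum_eq_zero_iff_of_nonneg
        (fun j _ => Complex.normSq_nonneg (r j))).mp h0.symm j (Finset.mem_univ j)
      exact Complex.normSq_eq_zero.mp this
    refine ⟨T.submatrix Fin.castSucc Fin.castSucc, ?_, ?_⟩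
    · refine Matrix.mem_unitaryGroup_iff'.mpr ?_
      ext j k
      simp only [Matrix.mul_apply, Matrix.star_apply, Matrix.submatrix_apply,
        Matrix.one_apply]
      calc (∑ i : Fin n, star (T i.castSucc j.castSucc) * T i.castSucc k.castSucc)
          = (if j = k then 1 else 0) - (starRingEnd ℂ) (r j) * r k := F1 j k
        _ = if j = k then 1 else 0 := by rw [hrz j]; simp
    · simp [frobNorm]
  · -- ρ > 0
    set ta : ℝ := ‖t‖ with htadef
    have htann : 0 ≤ ta := norm_nonneg t
    have hta2 : ta ^ 2 = Complex.normSq t := Complex.sq_norm t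
    have htale : ta ≤ 1 := by nlinarith
    set φ : ℂ := if t = 0 then 1 else (starRingEnd ℂ) t / (ta : ℂ) with hφdef
    have hφt : φ * t = (ta : ℂ) := by
      by_cases ht : t = 0
      · simp [hφdef, ht, htadef]
      · have htane : (ta : ℂ) ≠ 0 := by
          simp only [ne_eq, Complex.ofReal_eq_zero, htadef]
          exact norm_ne_zero_iff.mpr ht
        rw [hφdef, if_neg ht]
        field_simp
        rw [← Complex.normSq_eq_conj_mul_self, ← hta2]
        push_cast; ring
    have hφ1 : Complex.normSq φ = 1 := by
      by_cases ht : t = 0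
      · simp [hφdef, ht]
      · have htane : ta ≠ 0 := norm_ne_zero_iff.mpr ht
        rw [hφdef, if_neg ht]
        rw [Complex.normSq_div]
        simp only [Complex.normSq_conj, Complex.normSq_ofReal]
        rw [← hta2]
        field_simp
    set α : ℝ := ta - 1 with hαdef
    set β : ℂ := ((α / ρ : ℝ) : ℂ) * φ with hβdef
    set A₀ : Matrix (Fin n) (Fin n) ℂ :=
      Matrix.of (fun i k => T i.castSucc k.castSucc + β * c i * r k) with hAdef
    have hβt : β * t = ((α * ta / ρ : ℝ) : ℂ) := by
      rw [hβdef, mul_assoc, hφt]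
      push_cast; ring
    have hββ : (starRingEnd ℂ) β * β = (((α / ρ) ^ 2 : ℝ) : ℂ) := by
      rw [← Complex.normSq_eq_conj_mul_self, hβdef]
      rw [Complex.normSq_mul, Complex.normSq_ofReal, hφ1]
      push_cast; ring
    have hK : (-1 : ℂ) - β * t - (starRingEnd ℂ) (β * t) + (starRingEnd ℂ) β * β * (ρ:ℂ) = 0 := by
      rw [hβt, hββ, Complex.conj_ofReal]
      have hρne : ρ ≠ 0 := ne_of_gt hpos
      have hρval : ρ = 1 - ta ^ 2 := by rw [hta2]; linarith
      have key : -ρ - 2 * (α * ta) + α ^ 2 = 0 := by rw [hαdef, hρval]; ring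
      have hreal : (-1 : ℝ) - α * ta / ρ - α * ta / ρ + (α / ρ) ^ 2 * ρ = 0 := by
        have e : (-1 : ℝ) - α * ta / ρ - α * ta / ρ + (α / ρ) ^ 2 * ρ
            = (-ρ - 2 * (α * ta) + α ^ 2) / ρ := by
          field_simp
          ring
        rw [e, key, zero_div]
      calc (-1 : ℂ) - ((α * ta / ρ : ℝ) : ℂ) - ((α * ta / ρ : ℝ) : ℂ)
            + (((α / ρ) ^ 2 : ℝ) : ℂ) * (ρ:ℂ)
          = (((-1 : ℝ) - α * ta / ρ - α * ta / ρ + (α / ρ) ^ 2 * ρ : ℝ) : ℂ) := by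
            push_cast; ring
        _ = 0 := by rw [hreal]; simp
    refine ⟨A₀, ?_, ?_⟩
    · refine Matrix.mem_unitaryGroup_iff'.mpr ?_
      ext j k
      simp only [Matrix.mul_apply, Matrix.star_apply, Matrix.one_apply]
      have expand : ∀ i : Fin n, star (A₀ i j) * A₀ i k =
          (starRingEnd ℂ) (T i.castSucc j.castSucc) * T i.castSucc k.castSucc
          + (β * r k) * ((starRingEnd ℂ) (T i.castSucc j.castSucc) * c i)
          + ((starRingEnd ℂ) β * (starRingEnd ℂ) (r j))
              * ((starRingEnd ℂ) (c i) * T i.castSucc k.castSucc)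
          + ((starRingEnd ℂ) β * β * (starRingEnd ℂ) (r j) * r k)
              * ((starRingEnd ℂ) (c i) * c i) := by
        intro i
        simp only [hAdef, Matrix.of_apply, star_add, star_mul', starRingEnd_apply]
        ring
      rw [Finset.sum_congr rfl fun i _ => expand i]
      rw [Finset.sum_add_distrib, Finset.sum_add_distrib, Finset.sum_add_distrib,
        ← Finset.mul_sum, ← Finset.mul_sum, ← Finset.mul_sum]
      rw [F1 j k, F2 j, F2' k, hc]
      have : (starRingEnd ℂ) (r j) * r k *
          ((-1 : ℂ) - β * t - (starRingEnd ℂ) (β * t) + (starRingEnd ℂ) β * β * (ρ:ℂ)) = 0 := by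
        rw [hK]; ring
      simp only [_root_.map_mul] at this
      linear_combination this
    · -- Frobenius norm bound
      have hM : ∀ i j, (T.submatrix Fin.castSucc Fin.castSucc - A₀) i j = -(β * c i * r j) := by
        intro i j
        simp [hAdef, Matrix.sub_apply, Matrix.submatrix_apply]
      have htr : Matrix.trace ((T.submatrix Fin.castSucc Fin.castSucc - A₀)ᴴ
          * (T.submatrix Fin.castSucc Fin.castSucc - A₀)) = ((α ^ 2 : ℝ) : ℂ) := by
        rw [Matrix.trace]
        simp only [Matrix.diag_apply, Matrix.mul_apply, Matrix.conjTranspose_apply, hM]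
        have : ∀ j i : Fin n, star (-(β * c i * r j)) * -(β * c i * r j)
            = ((starRingEnd ℂ) β * β) * ((starRingEnd ℂ) (c i) * c i)
              * ((starRingEnd ℂ) (r j) * r j) := by
          intro j i
          simp only [star_neg, star_mul', starRingEnd_apply]
          ring
        rw [Finset.sum_congr rfl fun j _ => Finset.sum_congr rfl fun i _ => this j i]
        have hinner : ∀ j : Fin n, (∑ i : Fin n, ((starRingEnd ℂ) β * β)
            * ((starRingEnd ℂ) (c i) * c i) * ((starRingEnd ℂ) (r j) * r j))
            = ((starRingEnd ℂ) β * β) * (ρ:ℂ) * ((starRingEnd ℂ) (r j) * r j) := by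
          intro j
          rw [← Finset.sum_mul, ← Finset.mul_sum, hc]
        rw [Finset.sum_congr rfl fun j _ => hinner j, ← Finset.mul_sum, hρr, hββ]
        have hρne : ρ ≠ 0 := ne_of_gt hpos
        have hre : ((α / ρ) ^ 2 * ρ * ρ : ℝ) = α ^ 2 := by field_simp
        calc (((α / ρ) ^ 2 : ℝ) : ℂ) * (ρ:ℂ) * (ρ:ℂ)
            = (((α / ρ) ^ 2 * ρ * ρ : ℝ) : ℂ) := by push_cast; ring
          _ = ((α ^ 2 : ℝ) : ℂ) := by rw [hre]
      rw [frobNorm, htr]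
      simp only [Complex.ofReal_re]
      rw [Real.sqrt_sq_eq_abs, hαdef, abs_sub_comm, abs_of_nonneg (by linarith)]
      linarith
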